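/- For a uniformly random permutation Π of [n] and a fixed index i with 1 ≤ i ≤ n-4, the probability that the 5-tuple {i,…,i+4} is cornered equals 8/60 = 2/15. -/

import Mathlib

/-- The value of the permutation `π` at the (0-indexed) position `i`, as a natural
number (junk value `0` outside the range). -/
def pval {n : ℕ} (π : Equiv.Perm (Fin n)) (i : ℕ) : ℕ :=
  if h : i < n then (π ⟨i, h⟩).val else 0

/-- Position `i` (0-indexed) is extremal in `π`: it is an endpoint, or a strict local
maximum, or a strict local minimum. -/
def IsExtremal {n : ℕ} (π : Equiv.Perm (Fin n)) (i : ℕ) : Prop :=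
  i < n ∧ (i = 0 ∨ i = n - 1 ∨
    (pval π (i - 1) < pval π i ∧ pval π (i + 1) < pval π i) ∨
    (pval π i < pval π (i - 1) ∧ pval π i < pval π (i + 1)))

instance {n : ℕ} (π : Equiv.Perm (Fin n)) : DecidablePred (IsExtremal π) := fun i => by
  unfold IsExtremal; infer_instance

/-- `e(π)`: the number of extremal points of `π`. -/
def extremalCount {n : ℕ} (π : Equiv.Perm (Fin n)) : ℕ :=
  ((Finset.range n).filter (IsExtremal π)).card
/-- `f i, f (i+1), f (i+2)` is strictly monotone. -/
def Mono3 (f : ℕ → ℕ) (i : ℕ) : Prop :=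
  (f i < f (i + 1) ∧ f (i + 1) < f (i + 2)) ∨ (f (i + 2) < f (i + 1) ∧ f (i + 1) < f i)

/-- `f i, …, f (i+3)` is strictly monotone. -/
def Mono4 (f : ℕ → ℕ) (i : ℕ) : Prop :=
  (f i < f (i + 1) ∧ f (i + 1) < f (i + 2) ∧ f (i + 2) < f (i + 3)) ∨
  (f (i + 3) < f (i + 2) ∧ f (i + 2) < f (i + 1) ∧ f (i + 1) < f i)

/-- `f i, …, f (i+4)` is strictly monotone. -/
def Mono5 (f : ℕ → ℕ) (i : ℕ) : Prop :=
  (f i < f (i + 1) ∧ f (i + 1) < f (i + 2) ∧ f (i + 2) < f (i + 3) ∧ f (i + 3) < f (i + 4)) ∨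
  (f (i + 4) < f (i + 3) ∧ f (i + 3) < f (i + 2) ∧ f (i + 2) < f (i + 1) ∧ f (i + 1) < f i)

/-- The 5-tuple of consecutive positions `i, …, i+4` is cornered: the first four or the
last four values are monotone, but all five are not. -/
def Cornered {n : ℕ} (π : Equiv.Perm (Fin n)) (i : ℕ) : Prop :=
  (Mono4 (pval π) i ∨ Mono4 (pval π) (i + 1)) ∧ ¬ Mono5 (pval π) i

/-- The 5-tuple of consecutive positions `i, …, i+4` is crooked: the middle three values
are monotone, but no four consecutive values are. -/
def Crooked {n : ℕ} (π : Equiv.Perm (Fin n)) (i : ℕ) : Prop :=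
  Mono3 (pval π) (i + 1) ∧ ¬ Mono4 (pval π) i ∧ ¬ Mono4 (pval π) (i + 1)

instance {n : ℕ} (π : Equiv.Perm (Fin n)) : DecidablePred (Cornered π) := fun i => by
  unfold Cornered Mono4 Mono5; infer_instance

instance {n : ℕ} (π : Equiv.Perm (Fin n)) : DecidablePred (Crooked π) := fun i => by
  unfold Crooked Mono3 Mono4; infer_instance

/-- `co(π)`: the number of cornered 5-tuples of consecutive positions of `π`. -/
def corneredCount {n : ℕ} (π : Equiv.Perm (Fin n)) : ℕ :=
  ((Finset.range (n - 4)).filter (Cornered π)).card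

/-- `cr(π)`: the number of crooked 5-tuples of consecutive positions of `π`. -/
def crookedCount {n : ℕ} (π : Equiv.Perm (Fin n)) : ℕ :=
  ((Finset.range (n - 4)).filter (Crooked π)).card

/-- The probability that a fixed 5-tuple of consecutive positions of a uniformly random
permutation is cornered equals `8/60 = 2/15`. -/
def CorneredT {α : Type*} [LinearOrder α] (f : Fin 5 → α) : Prop :=
  ((f 0 < f 1 ∧ f 1 < f 2 ∧ f 2 < f 3) ∨ (f 3 < f 2 ∧ f 2 < f 1 ∧ f 1 < f 0) ∨
   (f 1 < f 2 ∧ f 2 < f 3 ∧ f 3 < f 4) ∨ (f 4 < f 3 ∧ f 3 < f 2 ∧ f 2 < f 1)) ∧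
  ¬ ((f 0 < f 1 ∧ f 1 < f 2 ∧ f 2 < f 3 ∧ f 3 < f 4) ∨
     (f 4 < f 3 ∧ f 3 < f 2 ∧ f 2 < f 1 ∧ f 1 < f 0))

instance {α : Type*} [LinearOrder α] : DecidablePred (CorneredT (α := α)) := fun f => by
  unfold CorneredT; infer_instance

-- congruence lemma
theorem CorneredT_congr {α β : Type*} [LinearOrder α] [LinearOrder β]
    {f : Fin 5 → α} {g : Fin 5 → β} (hfg : ∀ a b, f a < f b ↔ g a < g b) :
    CorneredT f ↔ CorneredT g := by
  unfold CorneredT; simp only [hfg]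

-- the embedding of positions
def emb {n i : ℕ} (h : i + 5 ≤ n) : Fin 5 ↪ Fin n :=
  ⟨fun k => ⟨i + k, by omega⟩, fun a b hab => by
    apply Fin.ext
    have := congrArg Fin.val hab
    simpa using this⟩

def patf {n i : ℕ} (h : i + 5 ≤ n) (π : Equiv.Perm (Fin n)) : Fin 5 → ℕ :=
  fun k => (π (emb h k)).val

theorem patf_injective {n i : ℕ} (h : i + 5 ≤ n) (π : Equiv.Perm (Fin n)) :
    Function.Injective (patf h π) := fun a b hab => by
  apply (emb h).injective
  apply π.injective
  exact Fin.ext hab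

theorem pval_eq_patf {n i : ℕ} (h : i + 5 ≤ n) (π : Equiv.Perm (Fin n)) (k : Fin 5) :
    pval π (i + k) = patf h π k := by
  have hk : i + (k : ℕ) < n := by omega
  simp only [pval, hk, dif_pos, patf, emb, Function.Embedding.coeFn_mk]
  rfl

theorem cornered_iff {n i : ℕ} (h : i + 5 ≤ n) (π : Equiv.Perm (Fin n)) :
    Cornered π i ↔ CorneredT (patf h π) := by
  have h0 := pval_eq_patf h π 0
  have h1 := pval_eq_patf h π 1
  have h2 := pval_eq_patf h π 2
  have h3 := pval_eq_patf h π 3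
  have h4 := pval_eq_patf h π 4
  simp only [Fin.isValue, Fin.val_zero, Fin.val_one, Fin.val_two, add_zero] at h0 h1 h2 h3 h4
  unfold Cornered Mono4 Mono5 CorneredT
  rw [show ((3:Fin 5):ℕ) = 3 from rfl] at h3
  rw [show ((4:Fin 5):ℕ) = 4 from rfl] at h4
  rw [show i+1+1 = i+2 from rfl, show i+1+2 = i+3 from rfl, show i+1+3 = i+4 from rfl,
    h0, h1, h2, h3, h4]
  constructor
  · rintro ⟨hA, hB⟩
    refine ⟨?_, hB⟩
    rcases hA with hA | hA
    · rcases hA with hA | hA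
      · exact Or.inl hA
      · exact Or.inr (Or.inl hA)
    · rcases hA with hA | hA
      · exact Or.inr (Or.inr (Or.inl hA))
      · exact Or.inr (Or.inr (Or.inr hA))
  · rintro ⟨hA, hB⟩
    refine ⟨?_, hB⟩
    rcases hA with hA | hA | hA | hA
    · exact Or.inl (Or.inl hA)
    · exact Or.inl (Or.inr hA)
    · exact Or.inr (Or.inl hA)
    · exact Or.inr (Or.inr hA)

-- rank permutation
theorem exists_rank {f : Fin 5 → ℕ} (hf : Function.Injective f) :
    ∃ rp : Equiv.Perm (Fin 5), ∀ a b, f a < f b ↔ rp a < rp b := by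
  classical
  have hcard : (Finset.univ.image f).card = 5 := by
    rw [Finset.card_image_of_injective _ hf, Finset.card_univ, Fintype.card_fin]
  have hmem : ∀ k, f k ∈ Finset.univ.image f :=
    fun k => Finset.mem_image_of_mem f (Finset.mem_univ k)
  let ord := (Finset.univ.image f).orderIsoOfFin hcard
  let r : Fin 5 → Fin 5 := fun k => ord.symm ⟨f k, hmem k⟩
  have key : ∀ a b, f a < f b ↔ r a < r b := by
    intro a b
    show f a < f b ↔ ord.symm ⟨f a, hmem a⟩ < ord.symm ⟨f b, hmem b⟩
    rw [OrderIso.lt_iff_lt]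
    exact Iff.symm Subtype.mk_lt_mk
  have hrinj : Function.Injective r := by
    intro a b hab
    apply hf
    have h2 : (⟨f a, hmem a⟩ : {x // x ∈ Finset.univ.image f}) = ⟨f b, hmem b⟩ :=
      ord.symm.injective hab
    exact Subtype.ext_iff.mp h2
  exact ⟨Equiv.ofBijective r (Finite.injective_iff_bijective.mp hrinj), key⟩

set_option maxRecDepth 10000 in
theorem count_cornered_perm5 :
    (Finset.univ.filter fun σ : Equiv.Perm (Fin 5) => CorneredT (⇑σ)).card = 16 := by
  decide

theorem count_sixteen {f : Fin 5 → ℕ} (hf : Function.Injective f) :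
    (Finset.univ.filter fun σ : Equiv.Perm (Fin 5) => CorneredT (f ∘ ⇑σ)).card = 16 := by
  obtain ⟨rp, hrp⟩ := exists_rank hf
  have h1 : ∀ σ : Equiv.Perm (Fin 5), CorneredT (f ∘ ⇑σ) ↔ CorneredT (⇑(rp * σ)) :=
    fun σ => CorneredT_congr (fun a b => hrp (σ a) (σ b))
  rw [Finset.filter_congr (fun σ _ => h1 σ)]
  rw [← count_cornered_perm5]
  apply Finset.card_equiv (Equiv.mulLeft rp)
  intro σ
  simp only [Finset.mem_filter, Finset.mem_univ, true_and, Equiv.coe_mulLeft]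

theorem key1 {n i : ℕ} (h : i + 5 ≤ n) (σ : Equiv.Perm (Fin 5)) :
    (Finset.univ.filter fun π : Equiv.Perm (Fin n) => CorneredT ((patf h π) ∘ ⇑σ)).card
      = (Finset.univ.filter fun π : Equiv.Perm (Fin n) => Cornered π i).card := by
  apply Finset.card_equiv (Equiv.mulRight (σ.viaFintypeEmbedding (emb h)))
  intro π
  simp only [Finset.mem_filter, Finset.mem_univ, true_and, Equiv.coe_mulRight]
  rw [cornered_iff h]
  have hpat : patf h (π * σ.viaFintypeEmbedding (emb h)) = patf h π ∘ ⇑σ := by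
    funext k
    show ((π * σ.viaFintypeEmbedding (emb h)) (emb h k)).val = (π (emb h (σ k))).val
    rw [Equiv.Perm.mul_apply, Equiv.Perm.viaFintypeEmbedding_apply_image]
  rw [hpat]

theorem stmt_9 (n i : ℕ) (h : i + 5 ≤ n) :
    15 * Nat.card {π : Equiv.Perm (Fin n) | Cornered π i} =
      2 * Nat.card (Equiv.Perm (Fin n)) := by
  classical
  have hS : Nat.card {π : Equiv.Perm (Fin n) | Cornered π i} =
      (Finset.univ.filter fun π : Equiv.Perm (Fin n) => Cornered π i).card := by
    rw [Nat.card_eq_fintype_card]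
    exact Fintype.card_subtype _
  have hdc : (∑ σ : Equiv.Perm (Fin 5), ∑ π : Equiv.Perm (Fin n),
        if CorneredT ((patf h π) ∘ ⇑σ) then 1 else 0) =
      ∑ π : Equiv.Perm (Fin n), ∑ σ : Equiv.Perm (Fin 5),
        if CorneredT ((patf h π) ∘ ⇑σ) then 1 else 0 := Finset.sum_comm
  have hL : (∑ σ : Equiv.Perm (Fin 5), ∑ π : Equiv.Perm (Fin n),
        if CorneredT ((patf h π) ∘ ⇑σ) then 1 else 0) =
      120 * (Finset.univ.filter fun π : Equiv.Perm (Fin n) => Cornered π i).card := by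
    have : ∀ σ : Equiv.Perm (Fin 5), (∑ π : Equiv.Perm (Fin n),
        if CorneredT ((patf h π) ∘ ⇑σ) then 1 else 0) =
        (Finset.univ.filter fun π : Equiv.Perm (Fin n) => Cornered π i).card := by
      intro σ
      rw [← key1 h σ, Finset.card_filter]
    rw [Finset.sum_congr rfl (fun σ _ => this σ), Finset.sum_const, Finset.card_univ,
      smul_eq_mul, Fintype.card_perm, Fintype.card_fin]
    norm_num [Nat.factorial]
  have hR : (∑ π : Equiv.Perm (Fin n), ∑ σ : Equiv.Perm (Fin 5),
        if CorneredT ((patf h π) ∘ ⇑σ) then 1 else 0) =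
      Fintype.card (Equiv.Perm (Fin n)) * 16 := by
    have : ∀ π : Equiv.Perm (Fin n), (∑ σ : Equiv.Perm (Fin 5),
        if CorneredT ((patf h π) ∘ ⇑σ) then 1 else 0) = 16 := by
      intro π
      rw [← count_sixteen (patf_injective h π), Finset.card_filter]
    rw [Finset.sum_congr rfl (fun π _ => this π), Finset.sum_const, Finset.card_univ,
      smul_eq_mul]
  rw [hS, Nat.card_eq_fintype_card]
  omega
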